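/- Let d ≥ 1, β > d and R ≥ 1. There exist constants 0 < c ≤ C, depending only on d and β (and not on R), such that for every real L ≥ 1: c L^{−3d} ≤ Σ_{n ∈ ℤ^d, |n|_∞ ≥ L} |n|^{−4d} Σ_{n' ∈ ℤ^d, |n'|_∞ ≥ L, |n−n'|_∞ ≤ L/R} (1+|n−n'|)^{−β} ≤ C L^{−3d}. -/

import Mathlib

/-- Euclidean norm of a lattice point of `ℤ^d`. -/
noncomputable def zEucNorm {d : ℕ} (n : Fin d → ℤ) : ℝ :=
  Real.sqrt (∑ i, ((n i : ℝ)) ^ 2)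

/-- ℓ∞ norm of a lattice point of `ℤ^d`. -/
noncomputable def zSupNorm {d : ℕ} (n : Fin d → ℤ) : ℝ :=
  ((Finset.univ.sup fun i => (n i).natAbs : ℕ) : ℝ)

open Finset

lemma zEucNorm_nonneg {d : ℕ} (n : Fin d → ℤ) : 0 ≤ zEucNorm n := Real.sqrt_nonneg _

lemma zSupNorm_nonneg {d : ℕ} (n : Fin d → ℤ) : 0 ≤ zSupNorm n := Nat.cast_nonneg _

lemma zEucNorm_zero {d : ℕ} : zEucNorm (0 : Fin d → ℤ) = 0 := by
  simp [zEucNorm]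

lemma abs_coord_le_zEucNorm {d : ℕ} (n : Fin d → ℤ) (i : Fin d) : |(n i : ℝ)| ≤ zEucNorm n := by
  rw [zEucNorm, ← Real.sqrt_sq_eq_abs]
  exact Real.sqrt_le_sqrt
    (Finset.single_le_sum (f := fun j => ((n j : ℝ)) ^ 2) (fun j _ => sq_nonneg _) (mem_univ i))

lemma zSupNorm_le_zEucNorm {d : ℕ} (n : Fin d → ℤ) : zSupNorm n ≤ zEucNorm n := by
  rcases Finset.eq_empty_or_nonempty (univ : Finset (Fin d)) with h | h
  · rw [zSupNorm, h]
    simpa using zEucNorm_nonneg n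
  · obtain ⟨i, _, hi⟩ := Finset.exists_mem_eq_sup univ h (fun i => (n i).natAbs)
    rw [zSupNorm, hi, Nat.cast_natAbs, Int.cast_abs]
    exact abs_coord_le_zEucNorm n i

lemma abs_coord_le_zSupNorm {d : ℕ} (n : Fin d → ℤ) (i : Fin d) : |(n i : ℝ)| ≤ zSupNorm n := by
  rw [← Int.cast_abs, ← Nat.cast_natAbs, zSupNorm]
  exact Nat.cast_le.mpr (Finset.le_sup (f := fun j => (n j).natAbs) (mem_univ i))

lemma zEucNorm_le_sqrt_mul {d : ℕ} (n : Fin d → ℤ) :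
    zEucNorm n ≤ Real.sqrt d * zSupNorm n := by
  rw [zEucNorm, ← Real.sqrt_sq (zSupNorm_nonneg n), ← Real.sqrt_mul (by positivity)]
  apply Real.sqrt_le_sqrt
  calc ∑ i, ((n i : ℝ)) ^ 2 ≤ ∑ _i : Fin d, (zSupNorm n) ^ 2 := by
        refine Finset.sum_le_sum fun i _ => ?_
        have h := abs_coord_le_zSupNorm n i
        nlinarith [abs_nonneg ((n i : ℝ)), sq_abs ((n i : ℝ))]
    _ = d * (zSupNorm n) ^ 2 := by simp [Finset.sum_const, nsmul_eq_mul]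

lemma summable_one_add_abs_rpow {s : ℝ} (hs : 1 < s) :
    Summable (fun m : ℤ => (1 + |(m : ℝ)|) ^ (-s)) := by
  have h0 : Summable (fun n : ℕ => ((n : ℝ)) ^ (-s)) :=
    Real.summable_nat_rpow.2 (by linarith)
  have h1 : Summable (fun n : ℕ => (1 + (n : ℝ)) ^ (-s)) := by
    refine ((summable_nat_add_iff 1).2 h0).congr fun n => ?_
    push_cast
    ring_nf
  refine Summable.of_nat_of_neg (h1.congr fun n => ?_) (h1.congr fun n => ?_) <;>
    simp

lemma pi_prod_summable_tsum (k : ℕ) {g : ℤ → ℝ} (hg0 : ∀ m, 0 ≤ g m) (hg : Summable g) :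
    Summable (fun n : Fin k → ℤ => ∏ i, g (n i)) ∧
      (∑' n : Fin k → ℤ, ∏ i, g (n i)) = (∑' m, g m) ^ k := by
  induction k with
  | zero =>
    have huniq : ∀ b : Fin 0 → ℤ, b = (default : Fin 0 → ℤ) := fun b => Subsingleton.elim _ _
    constructor
    · exact (hasSum_single (f := fun n : Fin 0 → ℤ => ∏ i, g (n i)) default
        (fun b hb => absurd (huniq b) hb)).summable
    · rw [pow_zero, tsum_eq_single (default : Fin 0 → ℤ) (fun b hb => absurd (huniq b) hb)]
      simp
  | succ k ih =>
    obtain ⟨ihs, iht⟩ := ih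
    set e := Fin.consEquiv (fun _ : Fin (k + 1) => ℤ) with he
    have hgn : Summable fun m => ‖g m‖ :=
      hg.congr fun m => ((Real.norm_eq_abs _).trans (abs_of_nonneg (hg0 m))).symm
    have hPn : Summable fun n : Fin k → ℤ => ‖∏ i, g (n i)‖ :=
      ihs.congr fun n => ((Real.norm_eq_abs _).trans
        (abs_of_nonneg (Finset.prod_nonneg fun i _ => hg0 _))).symm
    have hmul : Summable (fun p : ℤ × (Fin k → ℤ) => g p.1 * ∏ i, g (p.2 i)) := by
      apply summable_mul_of_summable_norm hgn hPn
    have hkey : ∀ p : ℤ × (Fin k → ℤ),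
        (∏ i, g ((e p) i)) = g p.1 * ∏ i, g (p.2 i) := by
      intro p
      have hep : e p = Fin.cons p.1 p.2 := rfl
      rw [hep, Fin.prod_univ_succ]
      simp
    constructor
    · exact e.summable_iff.1 (hmul.congr fun p => (hkey p).symm)
    · calc (∑' n : Fin (k + 1) → ℤ, ∏ i, g (n i))
          = ∑' p : ℤ × (Fin k → ℤ), ∏ i, g ((e p) i) :=
            (e.tsum_eq (fun n : Fin (k + 1) → ℤ => ∏ i, g (n i))).symm
        _ = ∑' p : ℤ × (Fin k → ℤ), g p.1 * ∏ i, g (p.2 i) := tsum_congr hkey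
        _ = (∑' m, g m) * (∑' n : Fin k → ℤ, ∏ i, g (n i)) :=
            (tsum_mul_tsum_of_summable_norm hgn hPn).symm
        _ = (∑' m, g m) ^ (k + 1) := by rw [iht, pow_succ]; ring

lemma rpow_neg_nat_eq (x : ℝ) (hx : 0 < x) (k : ℕ) : x ^ (-(k : ℝ)) = (x ^ k)⁻¹ := by
  rw [Real.rpow_neg hx.le, Real.rpow_natCast]

lemma telescope_bound {K : ℕ} (hK : 1 ≤ K) (t : Finset ℕ) (ht : ∀ n ∈ t, K ≤ n) :
    ∑ n ∈ t, ((n : ℝ)) ^ (-(4 : ℝ)) ≤ (16 / 3) * ((K : ℝ)) ^ (-(3 : ℝ)) := by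
  set f : ℕ → ℝ := fun n => (((n : ℝ)) ^ (3 : ℕ))⁻¹ with hf
  have hK0 : (0 : ℝ) < (K : ℝ) := by exact_mod_cast hK
  have hterm : ∀ n : ℕ, K ≤ n → ((n : ℝ)) ^ (-(4 : ℝ)) ≤ (16 / 3) * (f n - f (n + 1)) := by
    intro n hn
    have ha : (1 : ℝ) ≤ (n : ℝ) := by exact_mod_cast hK.trans hn
    have ha0 : (0 : ℝ) < (n : ℝ) := by linarith
    have ha1 : (0 : ℝ) < (n : ℝ) + 1 := by linarith
    have e4 : ((n : ℝ)) ^ (-(4 : ℝ)) = (((n : ℝ)) ^ (4 : ℕ))⁻¹ := by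
      rw [show (-(4 : ℝ)) = -((4 : ℕ) : ℝ) by norm_num, rpow_neg_nat_eq _ ha0]
    have e3' : f (n + 1) = ((((n : ℝ)) + 1) ^ (3 : ℕ))⁻¹ := by
      rw [hf]; push_cast; ring_nf
    rw [e4, e3']
    simp only [hf]
    set a := (n : ℝ)
    have hsub : (a ^ 3)⁻¹ - ((a + 1) ^ 3)⁻¹ = ((a + 1) ^ 3 - a ^ 3) / (a ^ 3 * (a + 1) ^ 3) := by
      rw [eq_div_iff (by positivity : (0:ℝ) < a ^ 3 * (a + 1) ^ 3).ne']
      have h3 : (a ^ 3) ≠ 0 := by positivity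
      have h3' : ((a + 1) ^ 3) ≠ 0 := by positivity
      field_simp
    rw [hsub, inv_eq_one_div, ← mul_div_assoc,
      div_le_div_iff₀ (by positivity) (by positivity)]
    nlinarith [pow_pos ha0 3, pow_pos ha0 4, sq_nonneg a,
      mul_le_mul_of_nonneg_left ha (by positivity : (0:ℝ) ≤ a ^ 3)]
  set N := max (t.sup id + 1) K with hN
  have htsub : t ⊆ Finset.Ico K N := by
    intro n hn
    refine Finset.mem_Ico.2 ⟨ht n hn, lt_of_lt_of_le (Nat.lt_succ_of_le (Finset.le_sup (f := id) hn)) (le_max_left _ _)⟩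
  have hKN : K ≤ N := le_max_right _ _
  have hfK : ((K : ℝ)) ^ (-(3 : ℝ)) = f K := by
    rw [hf, show (-(3 : ℝ)) = -((3 : ℕ) : ℝ) by norm_num, rpow_neg_nat_eq _ hK0]
  calc ∑ n ∈ t, ((n : ℝ)) ^ (-(4 : ℝ))
      ≤ ∑ n ∈ t, (16 / 3) * (f n - f (n + 1)) :=
        Finset.sum_le_sum fun n hn => hterm n (ht n hn)
    _ ≤ ∑ n ∈ Finset.Ico K N, (16 / 3) * (f n - f (n + 1)) := by
        apply Finset.sum_le_sum_of_subset_of_nonneg htsub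
        intro i hi _
        have hiK : K ≤ i := (Finset.mem_Ico.1 hi).1
        have hi0 : (0 : ℝ) < (i : ℝ) := by exact_mod_cast hK.trans hiK
        have hmono : f (i + 1) ≤ f i := by
          rw [hf]
          apply inv_anti₀ (by positivity)
          push_cast
          nlinarith
        nlinarith
    _ = (16 / 3) * ∑ n ∈ Finset.Ico K N, (f n - f (n + 1)) := by rw [Finset.mul_sum]
    _ = (16 / 3) * (f K - f N) := by
        congr 1
        rw [Finset.sum_Ico_eq_sum_range]
        have hstep : ∀ i, f (K + i) - f (K + i + 1) = f (K + i) - f (K + (i + 1)) := by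
          intro i
          norm_num [Nat.add_assoc]
        rw [Finset.sum_congr rfl fun i _ => hstep i,
          Finset.sum_range_sub' (fun i => f (K + i))]
        simp [Nat.add_sub_cancel' hKN]
    _ ≤ (16 / 3) * f K := by
        have h0 : 0 ≤ f N := by rw [hf]; positivity
        nlinarith
    _ = (16 / 3) * ((K : ℝ)) ^ (-(3 : ℝ)) := by rw [hfK]

lemma max_finset_bound {L : ℝ} (hL : 1 ≤ L) (s : Finset ℕ) :
    ∑ n ∈ s, (max L ((n : ℝ))) ^ (-(4 : ℝ)) ≤ 8 * L ^ (-(3 : ℝ)) := by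
  classical
  have hL0 : (0 : ℝ) < L := by linarith
  set K := ⌈L⌉₊ with hKdef
  have hK1 : 1 ≤ K := Nat.one_le_ceil_iff.2 hL0
  have hLK : L ≤ (K : ℝ) := Nat.le_ceil L
  have hK2 : (K : ℝ) ≤ 2 * L := by
    have := Nat.ceil_lt_add_one (by linarith : (0 : ℝ) ≤ L)
    linarith
  have hmulL : L * L ^ (-(4 : ℝ)) = L ^ (-(3 : ℝ)) := by
    rw [show (-(3 : ℝ)) = 1 + -(4 : ℝ) by norm_num, Real.rpow_add hL0, Real.rpow_one]
  have hL3 : (0 : ℝ) ≤ L ^ (-(3 : ℝ)) := Real.rpow_nonneg hL0.le _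
  have hL4 : (0 : ℝ) ≤ L ^ (-(4 : ℝ)) := Real.rpow_nonneg hL0.le _
  rw [← Finset.sum_filter_add_sum_filter_not s (fun n => n < K)]
  have part1 : ∑ n ∈ s.filter (fun n => n < K), (max L ((n : ℝ))) ^ (-(4 : ℝ))
      ≤ 2 * L ^ (-(3 : ℝ)) := by
    calc ∑ n ∈ s.filter (fun n => n < K), (max L ((n : ℝ))) ^ (-(4 : ℝ))
        ≤ ∑ _n ∈ s.filter (fun n => n < K), L ^ (-(4 : ℝ)) := by
          refine Finset.sum_le_sum fun n _ => ?_
          exact Real.rpow_le_rpow_of_nonpos hL0 (le_max_left _ _) (by norm_num)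
      _ = ((s.filter (fun n => n < K)).card : ℝ) * L ^ (-(4 : ℝ)) := by
          rw [Finset.sum_const, nsmul_eq_mul]
      _ ≤ (K : ℝ) * L ^ (-(4 : ℝ)) := by
          have hcard : (s.filter (fun n => n < K)).card ≤ K := by
            have hsub : s.filter (fun n => n < K) ⊆ Finset.range K := fun n hn =>
              Finset.mem_range.2 (Finset.mem_filter.1 hn).2
            simpa using Finset.card_le_card hsub
          exact mul_le_mul_of_nonneg_right (by exact_mod_cast hcard) hL4
      _ ≤ 2 * L * L ^ (-(4 : ℝ)) := by nlinarith
      _ = 2 * L ^ (-(3 : ℝ)) := by rw [mul_assoc, hmulL]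
  have part2 : ∑ n ∈ s.filter (fun n => ¬ n < K), (max L ((n : ℝ))) ^ (-(4 : ℝ))
      ≤ (16 / 3) * L ^ (-(3 : ℝ)) := by
    calc ∑ n ∈ s.filter (fun n => ¬ n < K), (max L ((n : ℝ))) ^ (-(4 : ℝ))
        ≤ ∑ n ∈ s.filter (fun n => ¬ n < K), ((n : ℝ)) ^ (-(4 : ℝ)) := by
          refine Finset.sum_le_sum fun n hn => ?_
          have hKn : K ≤ n := not_lt.1 (Finset.mem_filter.1 hn).2
          have hn0 : (0 : ℝ) < (n : ℝ) := by exact_mod_cast hK1.trans hKn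
          exact Real.rpow_le_rpow_of_nonpos hn0 (le_max_right _ _) (by norm_num)
      _ ≤ (16 / 3) * ((K : ℝ)) ^ (-(3 : ℝ)) :=
          telescope_bound hK1 _ (fun n hn => not_lt.1 (Finset.mem_filter.1 hn).2)
      _ ≤ (16 / 3) * L ^ (-(3 : ℝ)) := by
          have := Real.rpow_le_rpow_of_nonpos hL0 hLK (by norm_num : (-(3:ℝ)) ≤ 0)
          linarith
  linarith

lemma gmax_summable {L : ℝ} (hL : 1 ≤ L) :
    Summable (fun m : ℤ => (max L |(m : ℝ)|) ^ (-(4 : ℝ))) := by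
  have hbase : Summable (fun m : ℤ => 16 * (1 + |(m : ℝ)|) ^ (-(4 : ℝ))) :=
    (summable_one_add_abs_rpow (by norm_num : (1 : ℝ) < 4)).mul_left 16
  refine Summable.of_nonneg_of_le (fun m => by positivity) (fun m => ?_) hbase
  have habs : (0 : ℝ) ≤ |(m : ℝ)| := abs_nonneg _
  have h2 : (1 + |(m : ℝ)|) / 2 ≤ max L |(m : ℝ)| := by
    rcases le_total 1 |(m : ℝ)| with h | h
    · exact le_trans (by linarith) (le_max_right _ _)
    · exact le_trans (by linarith) (le_max_left _ _)
  have hhalf : (0 : ℝ) < (1 + |(m : ℝ)|) / 2 := by linarith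
  calc (max L |(m : ℝ)|) ^ (-(4 : ℝ))
      ≤ ((1 + |(m : ℝ)|) / 2) ^ (-(4 : ℝ)) :=
        Real.rpow_le_rpow_of_nonpos hhalf h2 (by norm_num)
    _ = 16 * (1 + |(m : ℝ)|) ^ (-(4 : ℝ)) := by
        rw [show (-(4 : ℝ)) = -((4 : ℕ) : ℝ) by norm_num,
          rpow_neg_nat_eq _ hhalf, rpow_neg_nat_eq _ (by linarith : (0:ℝ) < 1 + |(m : ℝ)|)]
        rw [div_pow, inv_div]
        rw [show ((2:ℝ)) ^ (4:ℕ) = 16 by norm_num]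
        ring

lemma gmax_tsum_le {L : ℝ} (hL : 1 ≤ L) :
    (∑' m : ℤ, (max L |(m : ℝ)|) ^ (-(4 : ℝ))) ≤ 16 * L ^ (-(3 : ℝ)) := by
  have hL0 : (0 : ℝ) < L := by linarith
  refine tsum_le_of_sum_le' (by positivity) fun s => ?_
  classical
  have key : ∀ m : ℤ, (max L |(m : ℝ)|) ^ (-(4 : ℝ))
      = (max L ((m.natAbs : ℝ))) ^ (-(4 : ℝ)) := by
    intro m
    rw [Nat.cast_natAbs, Int.cast_abs]
  rw [← Finset.sum_filter_add_sum_filter_not s (fun m => 0 ≤ m)]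
  have habs : ∀ (t : Finset ℤ), (∀ x ∈ t, ∀ y ∈ t, x.natAbs = y.natAbs → x = y) →
      ∑ m ∈ t, (max L |(m : ℝ)|) ^ (-(4 : ℝ)) ≤ 8 * L ^ (-(3 : ℝ)) := by
    intro t hinj
    calc ∑ m ∈ t, (max L |(m : ℝ)|) ^ (-(4 : ℝ))
        = ∑ m ∈ t, (max L ((m.natAbs : ℝ))) ^ (-(4 : ℝ)) := Finset.sum_congr rfl fun m _ => key m
      _ = ∑ n ∈ t.image Int.natAbs, (max L ((n : ℝ))) ^ (-(4 : ℝ)) :=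
          by rw [Finset.sum_image (fun x hx y hy h => hinj x hx y hy h)]
      _ ≤ 8 * L ^ (-(3 : ℝ)) := max_finset_bound hL _
  have h1 := habs (s.filter (fun m => 0 ≤ m)) (by
    intro x hx y hy h
    have hx' := (Finset.mem_filter.1 hx).2
    have hy' := (Finset.mem_filter.1 hy).2
    omega)
  have h2 := habs (s.filter (fun m => ¬ 0 ≤ m)) (by
    intro x hx y hy h
    have hx' := (Finset.mem_filter.1 hx).2
    have hy' := (Finset.mem_filter.1 hy).2
    omega)
  linarith

lemma summable_beta (d : ℕ) (hd : 1 ≤ d) {β : ℝ} (hβ : (d : ℝ) < β) :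
    Summable (fun m : Fin d → ℤ => (1 + zEucNorm m) ^ (-β)) := by
  have hd0 : (0 : ℝ) < (d : ℝ) := by exact_mod_cast hd
  set s := β / (d : ℝ) with hs
  have hs1 : 1 < s := (one_lt_div hd0).2 hβ
  have hg0 : ∀ m : ℤ, 0 ≤ (1 + |(m : ℝ)|) ^ (-s) := fun m => by positivity
  have hg : Summable (fun m : ℤ => (1 + |(m : ℝ)|) ^ (-s)) := summable_one_add_abs_rpow hs1
  refine Summable.of_nonneg_of_le
    (fun m => Real.rpow_nonneg (by linarith [zEucNorm_nonneg m]) _) (fun m => ?_)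
    (pi_prod_summable_tsum d hg0 hg).1
  have hE0 : (0 : ℝ) < 1 + zEucNorm m := by
    have := zEucNorm_nonneg m
    linarith
  have step1 : (1 + zEucNorm m) ^ (-β) = ((1 + zEucNorm m) ^ (-s)) ^ (d : ℕ) := by
    rw [← Real.rpow_natCast ((1 + zEucNorm m) ^ (-s)) d, ← Real.rpow_mul hE0.le]
    congr 1
    rw [hs, neg_mul, div_mul_cancel₀ _ hd0.ne']
  rw [step1, ← Fin.prod_const]
  refine Finset.prod_le_prod (fun i _ => by positivity) fun i _ => ?_
  have h1 : (0 : ℝ) < 1 + |(m i : ℝ)| := by positivity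
  exact Real.rpow_le_rpow_of_nonpos h1
    (by linarith [abs_coord_le_zEucNorm m i]) (by linarith)

/-- two-sided near-diagonal estimate
`c L^{-3d} ≤ Σ_{|n|_∞ ≥ L} |n|^{-4d} Σ_{|n'|_∞ ≥ L, |n-n'|_∞ ≤ L/R}
  (1+|n-n'|)^{-β} ≤ C L^{-3d}`, with constants independent of `R ≥ 1`. -/
theorem neardiagonal_two_sided_estimate (d : ℕ) (hd : 1 ≤ d) (β : ℝ)
    (hβ : (d : ℝ) < β) :
    ∃ c C : ℝ, 0 < c ∧ c ≤ C ∧ ∀ R : ℝ, 1 ≤ R → ∀ L : ℝ, 1 ≤ L →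
      Summable (fun n : {n : Fin d → ℤ // L ≤ zSupNorm n} =>
        zEucNorm n.1 ^ (-(4 * (d : ℝ))) *
          ∑' n' : {n' : Fin d → ℤ // L ≤ zSupNorm n' ∧ zSupNorm (n.1 - n') ≤ L / R},
            (1 + zEucNorm (n.1 - n'.1)) ^ (-β)) ∧
      c * L ^ (-(3 * (d : ℝ))) ≤
        (∑' n : {n : Fin d → ℤ // L ≤ zSupNorm n},
          zEucNorm n.1 ^ (-(4 * (d : ℝ))) *
            ∑' n' : {n' : Fin d → ℤ // L ≤ zSupNorm n' ∧ zSupNorm (n.1 - n') ≤ L / R},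
              (1 + zEucNorm (n.1 - n'.1)) ^ (-β)) ∧
      (∑' n : {n : Fin d → ℤ // L ≤ zSupNorm n},
        zEucNorm n.1 ^ (-(4 * (d : ℝ))) *
          ∑' n' : {n' : Fin d → ℤ // L ≤ zSupNorm n' ∧ zSupNorm (n.1 - n') ≤ L / R},
            (1 + zEucNorm (n.1 - n'.1)) ^ (-β)) ≤
        C * L ^ (-(3 * (d : ℝ))) := by
  classical
  have hd0 : (0 : ℝ) < (d : ℝ) := by exact_mod_cast hd
  set fβ : (Fin d → ℤ) → ℝ := fun m => (1 + zEucNorm m) ^ (-β) with hfβdef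
  have hfβ : Summable fβ := summable_beta d hd hβ
  have hfβ0 : ∀ m, 0 ≤ fβ m :=
    fun m => Real.rpow_nonneg (by linarith [zEucNorm_nonneg m]) _
  set S : ℝ := ∑' m : Fin d → ℤ, fβ m with hSdef
  have hS1 : 1 ≤ S := by
    have h0 : fβ 0 = 1 := by
      rw [hfβdef]; simp [zEucNorm_zero]
    calc (1 : ℝ) = fβ 0 := h0.symm
      _ ≤ S := hfβ.le_tsum 0 fun j _ => hfβ0 j
  have hS0 : 0 ≤ S := by linarith
  have hsd : (1 : ℝ) ≤ Real.sqrt d := by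
    rw [show (1 : ℝ) = Real.sqrt 1 by simp]
    exact Real.sqrt_le_sqrt (by exact_mod_cast hd)
  have h4sd : (1 : ℝ) ≤ 4 * Real.sqrt d := by linarith
  set c₀ : ℝ := (4 * Real.sqrt d) ^ (-(4 * (d : ℝ))) with hc0def
  have hc00 : 0 < c₀ := Real.rpow_pos_of_pos (by linarith) _
  have h4dneg : (-(4 * (d : ℝ))) ≤ 0 := by
    have : (0 : ℝ) ≤ 4 * (d : ℝ) := by positivity
    linarith
  refine ⟨c₀, S * 16 ^ d, hc00, ?_, ?_⟩
  · have h1 : c₀ ≤ 1 := Real.rpow_le_one_of_one_le_of_nonpos h4sd h4dneg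
    have h2 : (1 : ℝ) ≤ 16 ^ d := one_le_pow₀ (by norm_num)
    nlinarith
  intro R hR L hL
  have hL0 : (0 : ℝ) < L := by linarith
  have hLR0 : (0 : ℝ) ≤ L / R := by positivity
  -- inner sums
  have hsubL : ∀ n : Fin d → ℤ, Summable (fun n' : Fin d → ℤ => fβ (n - n')) := by
    intro n
    exact ((Equiv.subLeft n).summable_iff.mpr hfβ).congr fun n' => rfl
  have hinner_sum : ∀ n : Fin d → ℤ,
      Summable (fun n' : {n' : Fin d → ℤ // L ≤ zSupNorm n' ∧ zSupNorm (n - n') ≤ L / R} =>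
        fβ (n - n'.1)) := by
    intro n
    exact (hsubL n).subtype _
  have hinner_nonneg : ∀ n : Fin d → ℤ,
      0 ≤ ∑' n' : {n' : Fin d → ℤ // L ≤ zSupNorm n' ∧ zSupNorm (n - n') ≤ L / R},
        fβ (n - n'.1) :=
    fun n => tsum_nonneg fun n' => hfβ0 _
  have hinner_le : ∀ n : Fin d → ℤ,
      (∑' n' : {n' : Fin d → ℤ // L ≤ zSupNorm n' ∧ zSupNorm (n - n') ≤ L / R},
        fβ (n - n'.1)) ≤ S := by
    intro n
    calc (∑' n' : {n' : Fin d → ℤ // L ≤ zSupNorm n' ∧ zSupNorm (n - n') ≤ L / R},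
          fβ (n - n'.1))
        ≤ ∑' n' : Fin d → ℤ, fβ (n - n') :=
          Summable.tsum_subtype_le (fun n' : Fin d → ℤ => fβ (n - n'))
            {n' | L ≤ zSupNorm n' ∧ zSupNorm (n - n') ≤ L / R}
            (fun n' => hfβ0 _) (hsubL n)
      _ = S := by
          have h := (Equiv.subLeft n).tsum_eq fβ
          simpa [Equiv.subLeft] using h
  have hinner_ge : ∀ n : Fin d → ℤ, L ≤ zSupNorm n →
      (1 : ℝ) ≤ ∑' n' : {n' : Fin d → ℤ // L ≤ zSupNorm n' ∧ zSupNorm (n - n') ≤ L / R},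
        fβ (n - n'.1) := by
    intro n hn
    have hzero : zSupNorm (n - n) ≤ L / R := by
      rw [sub_self]
      have : zSupNorm (0 : Fin d → ℤ) = 0 := by simp [zSupNorm]
      rw [this]; exact hLR0
    have hmem : L ≤ zSupNorm n ∧ zSupNorm (n - n) ≤ L / R := ⟨hn, hzero⟩
    have hval : fβ (n - (⟨n, hmem⟩ :
        {n' : Fin d → ℤ // L ≤ zSupNorm n' ∧ zSupNorm (n - n') ≤ L / R}).1) = 1 := by
      rw [hfβdef]; simp [sub_self, zEucNorm_zero]
    calc (1 : ℝ) = fβ (n - n) := by rw [sub_self, hfβdef]; simp [zEucNorm_zero]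
      _ ≤ _ := (hinner_sum n).le_tsum ⟨n, hmem⟩ fun j _ => hfβ0 _
  -- the majorant over the outer subtype
  set gm : ℤ → ℝ := fun m => (max L |(m : ℝ)|) ^ (-(4 : ℝ)) with hgmdef
  have hgm0 : ∀ m, 0 ≤ gm m :=
    fun m => Real.rpow_nonneg (le_trans hL0.le (le_max_left _ _)) _
  have hgm : Summable gm := gmax_summable hL
  obtain ⟨hGp, hGptsum⟩ := pi_prod_summable_tsum d hgm0 hgm
  have hpoint : ∀ n : Fin d → ℤ, L ≤ zSupNorm n →
      zEucNorm n ^ (-(4 * (d : ℝ))) ≤ ∏ i, gm (n i) := by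
    intro n hn
    have hE : L ≤ zEucNorm n := hn.trans (zSupNorm_le_zEucNorm n)
    have hE0 : (0 : ℝ) < zEucNorm n := lt_of_lt_of_le hL0 hE
    have step1 : zEucNorm n ^ (-(4 * (d : ℝ))) = (zEucNorm n ^ (-(4 : ℝ))) ^ (d : ℕ) := by
      rw [← Real.rpow_natCast (zEucNorm n ^ (-(4 : ℝ))) d, ← Real.rpow_mul hE0.le]
      congr 1
      ring
    rw [step1, ← Fin.prod_const]
    refine Finset.prod_le_prod (fun i _ => Real.rpow_nonneg hE0.le _) fun i _ => ?_
    have hmax : max L |(n i : ℝ)| ≤ zEucNorm n :=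
      max_le hE (abs_coord_le_zEucNorm n i)
    have hmax0 : (0 : ℝ) < max L |(n i : ℝ)| := lt_of_lt_of_le hL0 (le_max_left _ _)
    exact Real.rpow_le_rpow_of_nonpos hmax0 hmax (by norm_num)
  set u : {n : Fin d → ℤ // L ≤ zSupNorm n} → ℝ :=
    fun n => zEucNorm n.1 ^ (-(4 * (d : ℝ))) with hudef
  have hu0 : ∀ n, 0 ≤ u n := fun n => Real.rpow_nonneg (zEucNorm_nonneg _) _
  have hGpsub : Summable (fun n : {n : Fin d → ℤ // L ≤ zSupNorm n} => ∏ i, gm (n.1 i)) :=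
    hGp.subtype _
  have hu_sum : Summable u :=
    Summable.of_nonneg_of_le hu0 (fun n => hpoint n.1 n.2) hGpsub
  have hu_tsum_le : (∑' n : {n : Fin d → ℤ // L ≤ zSupNorm n}, u n)
      ≤ 16 ^ d * L ^ (-(3 * (d : ℝ))) := by
    calc (∑' n : {n : Fin d → ℤ // L ≤ zSupNorm n}, u n)
        ≤ ∑' n : {n : Fin d → ℤ // L ≤ zSupNorm n}, ∏ i, gm (n.1 i) :=
          Summable.tsum_le_tsum (fun n => hpoint n.1 n.2) hu_sum hGpsub
      _ ≤ ∑' n : Fin d → ℤ, ∏ i, gm (n i) :=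
          Summable.tsum_subtype_le (fun n : Fin d → ℤ => ∏ i, gm (n i)) _
            (fun n => Finset.prod_nonneg fun i _ => hgm0 _) hGp
      _ = (∑' m : ℤ, gm m) ^ d := hGptsum
      _ ≤ (16 * L ^ (-(3 : ℝ))) ^ d := by
          apply pow_le_pow_left₀ (tsum_nonneg hgm0) (gmax_tsum_le hL)
      _ = 16 ^ d * L ^ (-(3 * (d : ℝ))) := by
          rw [mul_pow]
          congr 1
          rw [← Real.rpow_natCast (L ^ (-(3 : ℝ))) d, ← Real.rpow_mul hL0.le]
          congr 1
          ring
  -- lower bound for ∑ u via a box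
  set K := ⌈L⌉₊ with hKdef
  have hK1 : 1 ≤ K := Nat.one_le_ceil_iff.2 hL0
  have hLK : L ≤ (K : ℝ) := Nat.le_ceil L
  have hK2 : (K : ℝ) ≤ 2 * L := by
    have := Nat.ceil_lt_add_one (by linarith : (0 : ℝ) ≤ L)
    linarith
  set box : Finset (Fin d → ℤ) :=
    Fintype.piFinset (fun _ : Fin d => Finset.Icc (K : ℤ) (2 * K - 1)) with hboxdef
  have hboxcoord : ∀ n ∈ box, ∀ i, (K : ℤ) ≤ n i ∧ n i ≤ 2 * K - 1 := by
    intro n hn i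
    have := Fintype.mem_piFinset.1 hn i
    exact Finset.mem_Icc.1 this
  have hboxP : ∀ n ∈ box, L ≤ zSupNorm n := by
    intro n hn
    obtain ⟨h1, h2⟩ := hboxcoord n hn ⟨0, hd⟩
    have : (K : ℝ) ≤ |(n ⟨0, hd⟩ : ℝ)| := by
      have hcast : (K : ℝ) ≤ ((n ⟨0, hd⟩ : ℤ) : ℝ) := by exact_mod_cast h1
      exact hcast.trans (le_abs_self _)
    exact hLK.trans (this.trans (abs_coord_le_zSupNorm n _))
  have hboxE : ∀ n ∈ box, zEucNorm n ≤ 4 * Real.sqrt d * L := by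
    intro n hn
    have hsup : zSupNorm n ≤ 4 * L := by
      rcases Finset.eq_empty_or_nonempty (Finset.univ : Finset (Fin d)) with h | h
      · rw [zSupNorm, h]; simp; positivity
      · obtain ⟨j, _, hj⟩ := Finset.exists_mem_eq_sup Finset.univ h (fun i => (n i).natAbs)
        rw [zSupNorm, hj, Nat.cast_natAbs, Int.cast_abs]
        obtain ⟨hj1, hj2⟩ := hboxcoord n hn j
        have h1 : ((n j : ℤ) : ℝ) ≤ 2 * (K : ℝ) - 1 := by exact_mod_cast hj2
        have h2 : (0 : ℝ) ≤ ((n j : ℤ) : ℝ) := by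
          have : (0 : ℤ) ≤ n j := le_trans (by positivity) hj1
          exact_mod_cast this
        rw [abs_of_nonneg h2]
        linarith
    calc zEucNorm n ≤ Real.sqrt d * zSupNorm n := zEucNorm_le_sqrt_mul n
      _ ≤ Real.sqrt d * (4 * L) := by
          have h0 : (0 : ℝ) ≤ Real.sqrt d := Real.sqrt_nonneg _
          nlinarith
      _ = 4 * Real.sqrt d * L := by ring
  have hboxcard : box.card = K ^ d := by
    rw [hboxdef, Fintype.card_piFinset]
    have hc : (Finset.Icc (K : ℤ) (2 * K - 1)).card = K := by
      rw [Int.card_Icc]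
      omega
    simp [hc, Finset.prod_const]
  set sbox : Finset {n : Fin d → ℤ // L ≤ zSupNorm n} :=
    box.subtype (fun n => L ≤ zSupNorm n) with hsboxdef
  have hsboxcard : sbox.card = K ^ d := by
    rw [hsboxdef, Finset.card_subtype, Finset.filter_true_of_mem hboxP, hboxcard]
  have hubound : ∀ x ∈ sbox, (4 * Real.sqrt d * L) ^ (-(4 * (d : ℝ))) ≤ u x := by
    intro x hx
    have hxbox : x.1 ∈ box := by
      have := Finset.mem_subtype.1 hx
      exact this
    have hE : L ≤ zEucNorm x.1 := x.2.trans (zSupNorm_le_zEucNorm _)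
    have hE0 : (0 : ℝ) < zEucNorm x.1 := lt_of_lt_of_le hL0 hE
    exact Real.rpow_le_rpow_of_nonpos hE0 (hboxE x.1 hxbox) h4dneg
  have hu_tsum_ge : c₀ * L ^ (-(3 * (d : ℝ)))
      ≤ ∑' n : {n : Fin d → ℤ // L ≤ zSupNorm n}, u n := by
    have hsum_ge : (sbox.card : ℝ) * ((4 * Real.sqrt d * L) ^ (-(4 * (d : ℝ))))
        ≤ ∑ x ∈ sbox, u x := by
      have := Finset.card_nsmul_le_sum sbox u _ hubound
      simpa [nsmul_eq_mul] using this
    have hsum_le_tsum : ∑ x ∈ sbox, u x ≤ ∑' n : {n : Fin d → ℤ // L ≤ zSupNorm n}, u n :=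
      Summable.sum_le_tsum sbox (fun n _ => hu0 n) hu_sum
    have hsplit : (4 * Real.sqrt d * L) ^ (-(4 * (d : ℝ)))
        = c₀ * L ^ (-(4 * (d : ℝ))) := by
      rw [hc0def, ← Real.mul_rpow (by linarith) hL0.le]
    have hKd : L ^ (d : ℕ) ≤ ((K : ℝ)) ^ (d : ℕ) := pow_le_pow_left₀ hL0.le hLK d
    have hLd : (0 : ℝ) < L ^ (d : ℕ) := pow_pos hL0 d
    have hfinal : c₀ * L ^ (-(3 * (d : ℝ)))
        ≤ (sbox.card : ℝ) * ((4 * Real.sqrt d * L) ^ (-(4 * (d : ℝ)))) := by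
      rw [hsboxcard, hsplit]
      push_cast
      have hexp : L ^ (-(3 * (d : ℝ))) = L ^ (d : ℕ) * L ^ (-(4 * (d : ℝ))) := by
        rw [← Real.rpow_natCast L d, ← Real.rpow_add hL0]
        congr 1
        ring
      rw [hexp]
      have hL4 : (0 : ℝ) ≤ L ^ (-(4 * (d : ℝ))) := Real.rpow_nonneg hL0.le _
      calc c₀ * (L ^ (d : ℕ) * L ^ (-(4 * (d : ℝ))))
          ≤ c₀ * (((K : ℝ)) ^ (d : ℕ) * L ^ (-(4 * (d : ℝ)))) := by
            apply mul_le_mul_of_nonneg_left _ hc00.le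
            exact mul_le_mul_of_nonneg_right hKd hL4
        _ = ((K : ℝ)) ^ (d : ℕ) * (c₀ * L ^ (-(4 * (d : ℝ)))) := by ring
    exact hfinal.trans (hsum_ge.trans hsum_le_tsum)
  -- assemble
  have hF_up : ∀ n : {n : Fin d → ℤ // L ≤ zSupNorm n},
      zEucNorm n.1 ^ (-(4 * (d : ℝ))) *
        (∑' n' : {n' : Fin d → ℤ // L ≤ zSupNorm n' ∧ zSupNorm (n.1 - n') ≤ L / R},
          fβ (n.1 - n'.1)) ≤ S * u n := by
    intro n
    rw [mul_comm S (u n)]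
    exact mul_le_mul_of_nonneg_left (hinner_le n.1) (hu0 n)
  have hF_low : ∀ n : {n : Fin d → ℤ // L ≤ zSupNorm n},
      u n ≤ zEucNorm n.1 ^ (-(4 * (d : ℝ))) *
        (∑' n' : {n' : Fin d → ℤ // L ≤ zSupNorm n' ∧ zSupNorm (n.1 - n') ≤ L / R},
          fβ (n.1 - n'.1)) := by
    intro n
    calc u n = u n * 1 := by ring
      _ ≤ _ := mul_le_mul_of_nonneg_left (hinner_ge n.1 n.2) (hu0 n)
  have hF0 : ∀ n : {n : Fin d → ℤ // L ≤ zSupNorm n},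
      0 ≤ zEucNorm n.1 ^ (-(4 * (d : ℝ))) *
        (∑' n' : {n' : Fin d → ℤ // L ≤ zSupNorm n' ∧ zSupNorm (n.1 - n') ≤ L / R},
          fβ (n.1 - n'.1)) :=
    fun n => mul_nonneg (hu0 n) (hinner_nonneg n.1)
  have hFsum : Summable (fun n : {n : Fin d → ℤ // L ≤ zSupNorm n} =>
      zEucNorm n.1 ^ (-(4 * (d : ℝ))) *
        (∑' n' : {n' : Fin d → ℤ // L ≤ zSupNorm n' ∧ zSupNorm (n.1 - n') ≤ L / R},
          fβ (n.1 - n'.1))) :=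
    Summable.of_nonneg_of_le hF0 hF_up (hu_sum.mul_left S)
  refine ⟨hFsum, ?_, ?_⟩
  · calc c₀ * L ^ (-(3 * (d : ℝ)))
        ≤ ∑' n : {n : Fin d → ℤ // L ≤ zSupNorm n}, u n := hu_tsum_ge
      _ ≤ _ := Summable.tsum_le_tsum hF_low hu_sum hFsum
  · calc (∑' n : {n : Fin d → ℤ // L ≤ zSupNorm n},
          zEucNorm n.1 ^ (-(4 * (d : ℝ))) *
            (∑' n' : {n' : Fin d → ℤ // L ≤ zSupNorm n' ∧ zSupNorm (n.1 - n') ≤ L / R},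
              fβ (n.1 - n'.1)))
        ≤ ∑' n : {n : Fin d → ℤ // L ≤ zSupNorm n}, S * u n :=
          Summable.tsum_le_tsum hF_up hFsum (hu_sum.mul_left S)
      _ = S * ∑' n : {n : Fin d → ℤ // L ≤ zSupNorm n}, u n := tsum_mul_left
      _ ≤ S * (16 ^ d * L ^ (-(3 * (d : ℝ)))) :=
          mul_le_mul_of_nonneg_left hu_tsum_le hS0
      _ = S * 16 ^ d * L ^ (-(3 * (d : ℝ))) := by ring
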